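/- Let F : ℝ → ℝ be a C¹ diffeomorphism with C_F⁻¹ ≤ |F'(x)| ≤ C_F for all x, for some C_F ≥ 1. If X is δ-regular with constant C_R on scales α₀ to α₁ with α₁ ≥ C_F²α₀, then F(X) is δ-regular with constant C_F·C_R on scales C_Fα₀ to C_F⁻¹α₁. -/

import Mathlib

open MeasureTheory Set

/-- `X` is δ-regular with constant `CR` on scales `α₀` to `α₁`. -/
def IsDeltaRegular (X : Set ℝ) (δ CR α₀ α₁ : ℝ) : Prop :=
  ∃ μ : Measure ℝ,
    μ Xᶜ = 0 ∧
    (∀ a b : ℝ, α₀ ≤ b - a → b - a ≤ α₁ →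
        μ (Set.Icc a b) ≤ ENNReal.ofReal (CR * (b - a) ^ δ)) ∧
    (∀ a b : ℝ, α₀ ≤ b - a → b - a ≤ α₁ → (a + b) / 2 ∈ X →
        ENNReal.ofReal (CR⁻¹ * (b - a) ^ δ) ≤ μ (Set.Icc a b))

/-- δ-regularity is invariant under negation. -/
lemma neg_deltaRegular (Y : Set ℝ) (δ CR a₀ a₁ : ℝ)
    (h : IsDeltaRegular Y δ CR a₀ a₁) :
    IsDeltaRegular (Neg.neg '' Y) δ CR a₀ a₁ := by
  obtain ⟨μ, h0, hu, hl⟩ := h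
  set e : ℝ ≃ᵐ ℝ := (Homeomorph.neg ℝ).toMeasurableEquiv with he
  have hce : ⇑e = fun x : ℝ => -x := rfl
  refine ⟨μ.map e, ?_, ?_, ?_⟩
  · rw [MeasurableEquiv.map_apply]
    have : ⇑e ⁻¹' (Neg.neg '' Y)ᶜ = Yᶜ := by
      ext x
      simp [hce, Set.mem_image, neg_eq_iff_eq_neg]
    rw [this, h0]
  · intro a b h1 h2
    rw [MeasurableEquiv.map_apply]
    have hpre : ⇑e ⁻¹' Set.Icc a b = Set.Icc (-b) (-a) := by
      ext x; simp only [hce, Set.mem_preimage, Set.mem_Icc]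
      constructor <;> (intro ⟨u, v⟩; constructor <;> linarith)
    rw [hpre]
    have hlen : (-a) - (-b) = b - a := by ring
    have := hu (-b) (-a) (by rw [hlen]; exact h1) (by rw [hlen]; exact h2)
    rwa [hlen] at this
  · intro a b h1 h2 hm
    rw [MeasurableEquiv.map_apply]
    have hpre : ⇑e ⁻¹' Set.Icc a b = Set.Icc (-b) (-a) := by
      ext x; simp only [hce, Set.mem_preimage, Set.mem_Icc]
      constructor <;> (intro ⟨u, v⟩; constructor <;> linarith)
    rw [hpre]
    have hlen : (-a) - (-b) = b - a := by ring
    have hm' : ((-b) + (-a)) / 2 ∈ Y := by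
      obtain ⟨y, hy, hxy⟩ := hm
      have : ((-b) + (-a)) / 2 = y := by linarith
      rwa [this]
    have := hl (-b) (-a) (by rw [hlen]; exact h1) (by rw [hlen]; exact h2) hm'
    rwa [hlen] at this

/-- Core lemma: the strictly increasing, bi-Lipschitz case. -/
lemma core_deltaRegular (F : ℝ → ℝ) (CF : ℝ) (hCF : 1 ≤ CF)
    (hsurj : Function.Surjective F)
    (hbd : ∀ x y : ℝ, x ≤ y → CF⁻¹ * (y - x) ≤ F y - F x ∧ F y - F x ≤ CF * (y - x))
    (X : Set ℝ) (δ CR α₀ α₁ : ℝ)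
    (hδ0 : 0 ≤ δ) (hδ1 : δ ≤ 1) (hCR : 1 ≤ CR) (hα0 : 0 ≤ α₀) (hα : CF ^ 2 * α₀ ≤ α₁)
    (h : IsDeltaRegular X δ CR α₀ α₁) :
    IsDeltaRegular (F '' X) δ (CF * CR) (CF * α₀) (CF⁻¹ * α₁) := by
  obtain ⟨μ, h0, hu, hl⟩ := h
  have hCF0 : 0 < CF := lt_of_lt_of_le one_pos hCF
  have hCFi0 : 0 < CF⁻¹ := inv_pos.mpr hCF0
  have hCFi1 : CF⁻¹ ≤ 1 := by
    rw [inv_le_one_iff₀]; right; exact hCF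
  have hCFmul : CF * CF⁻¹ = 1 := mul_inv_cancel₀ (ne_of_gt hCF0)
  have hα₁0 : 0 ≤ α₁ := le_trans (by positivity) hα
  have hmono : StrictMono F := by
    intro x y hxy
    have := (hbd x y hxy.le).1
    nlinarith
  have hCR0 : 0 < CR := lt_of_lt_of_le one_pos hCR
  -- CF ^ δ bounds
  have hCFd1 : 1 ≤ CF ^ δ := Real.one_le_rpow hCF hδ0
  have hCFd : CF ^ δ ≤ CF := by
    calc CF ^ δ ≤ CF ^ (1 : ℝ) := Real.rpow_le_rpow_of_exponent_le hCF hδ1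
    _ = CF := Real.rpow_one CF
  set e : ℝ ≃ᵐ ℝ :=
    ((StrictMono.orderIsoOfSurjective F hmono hsurj).toHomeomorph).toMeasurableEquiv with he
  have hce : ⇑e = F := by
    rw [he]
    exact StrictMono.coe_orderIsoOfSurjective F hmono hsurj
  refine ⟨μ.map e, ?_, ?_, ?_⟩
  · rw [MeasurableEquiv.map_apply, hce]
    have : F ⁻¹' (F '' X)ᶜ = Xᶜ := by
      rw [Set.preimage_compl, Function.Injective.preimage_image hmono.injective]
    rw [this, h0]
  · -- upper bound
    intro a b h1 h2
    have hab : a ≤ b := by nlinarith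
    rw [MeasurableEquiv.map_apply, hce]
    set c := e.symm a with hc
    set d := e.symm b with hd
    have hFc : F c = a := by rw [← hce, hc]; exact e.apply_symm_apply a
    have hFd : F d = b := by rw [← hce, hd]; exact e.apply_symm_apply b
    have hcd : c ≤ d := by
      rw [← hmono.le_iff_le, hFc, hFd]; exact hab
    have hpre : F ⁻¹' Set.Icc a b = Set.Icc c d := by
      ext x
      simp only [Set.mem_preimage, Set.mem_Icc]
      rw [← hFc, ← hFd, hmono.le_iff_le, hmono.le_iff_le]
    obtain ⟨hb1, hb2⟩ := hbd c d hcd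
    rw [hFc, hFd] at hb1 hb2
    have hdc1 : d - c ≤ CF * (b - a) := by nlinarith
    have hdc2 : CF⁻¹ * (b - a) ≤ d - c := by nlinarith
    rw [hpre]
    have hscale1 : α₀ ≤ d - c := by
      have e1 : CF⁻¹ * (CF * α₀) = α₀ := by field_simp
      have e2 : CF⁻¹ * (CF * α₀) ≤ CF⁻¹ * (b - a) := mul_le_mul_of_nonneg_left h1 hCFi0.le
      linarith
    have hscale2 : d - c ≤ α₁ := by
      have e2 : CF * (b - a) ≤ CF * (CF⁻¹ * α₁) := mul_le_mul_of_nonneg_left h2 hCF0.le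
      have e1 : CF * (CF⁻¹ * α₁) = α₁ := by field_simp
      linarith
    refine le_trans (hu c d hscale1 hscale2) (ENNReal.ofReal_le_ofReal ?_)
    have hr1 : (d - c) ^ δ ≤ (CF * (b - a)) ^ δ :=
      Real.rpow_le_rpow (by linarith) hdc1 hδ0
    have hr2 : (CF * (b - a)) ^ δ = CF ^ δ * (b - a) ^ δ :=
      Real.mul_rpow hCF0.le (by linarith)
    have hba0 : (0:ℝ) ≤ (b - a) ^ δ := Real.rpow_nonneg (by linarith) δ
    have h3 : CF ^ δ * (b - a) ^ δ ≤ CF * (b - a) ^ δ :=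
      mul_le_mul_of_nonneg_right hCFd hba0
    calc CR * (d - c) ^ δ ≤ CR * (CF ^ δ * (b - a) ^ δ) := by
          rw [← hr2]; exact mul_le_mul_of_nonneg_left hr1 hCR0.le
    _ ≤ CR * (CF * (b - a) ^ δ) := mul_le_mul_of_nonneg_left h3 hCR0.le
    _ = CF * CR * (b - a) ^ δ := by ring
  · -- lower bound
    intro a b h1 h2 hm
    have hab : a ≤ b := by nlinarith
    obtain ⟨p, hpX, hFp⟩ := hm
    rw [MeasurableEquiv.map_apply, hce]
    set r := (b - a) / (2 * CF) with hr
    have hr0 : 0 ≤ r := by rw [hr]; exact div_nonneg (by linarith) (by positivity)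
    have hlen : (p + r) - (p - r) = (b - a) / CF := by rw [hr]; ring
    have hsub : Set.Icc (p - r) (p + r) ⊆ F ⁻¹' Set.Icc a b := by
      intro x hx
      simp only [Set.mem_Icc] at hx
      simp only [Set.mem_preimage, Set.mem_Icc]
      have hCFr : CF * r = (b - a) / 2 := by
        rw [hr]; field_simp
      have hab2 : a ≤ b := by nlinarith [mul_nonneg hCF0.le hα0]
      rcases le_total x p with hxp | hxp
      · obtain ⟨hb1, hb2⟩ := hbd x p hxp
        have k1 : CF * (p - x) ≤ CF * r := mul_le_mul_of_nonneg_left (by linarith [hx.2]) hCF0.le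
        have k2 : (0:ℝ) ≤ CF⁻¹ * (p - x) := mul_nonneg hCFi0.le (by linarith)
        exact ⟨by linarith, by linarith⟩
      · obtain ⟨hb1, hb2⟩ := hbd p x hxp
        have k1 : CF * (x - p) ≤ CF * r := mul_le_mul_of_nonneg_left (by linarith [hx.2]) hCF0.le
        have k2 : (0:ℝ) ≤ CF⁻¹ * (x - p) := mul_nonneg hCFi0.le (by linarith)
        exact ⟨by linarith, by linarith⟩
    have hscale1 : α₀ ≤ (p + r) - (p - r) := by
      rw [hlen, le_div_iff₀ hCF0]
      linarith
    have hscale2 : (p + r) - (p - r) ≤ α₁ := by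
      rw [hlen, div_le_iff₀ hCF0]
      have k1 : CF⁻¹ * α₁ ≤ 1 * α₁ := mul_le_mul_of_nonneg_right hCFi1 hα₁0
      have k2 : 1 * α₁ ≤ CF * α₁ := mul_le_mul_of_nonneg_right hCF hα₁0
      linarith

    have hmid : ((p - r) + (p + r)) / 2 ∈ X := by
      have : ((p - r) + (p + r)) / 2 = p := by ring
      rwa [this]
    have hkey := hl (p - r) (p + r) hscale1 hscale2 hmid
    refine le_trans ?_ (le_trans hkey (measure_mono hsub))
    apply ENNReal.ofReal_le_ofReal
    rw [hlen, Real.div_rpow (by linarith) hCF0.le]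
    have hba0 : (0:ℝ) ≤ (b - a) ^ δ := Real.rpow_nonneg (by linarith) δ
    rw [mul_inv, div_eq_mul_inv]
    have hCFd0 : (0:ℝ) < CF ^ δ := by linarith
    have hinv : CF⁻¹ ≤ (CF ^ δ)⁻¹ := by
      rw [inv_le_inv₀ hCF0 hCFd0]
      exact hCFd
    have hCR0' : (0:ℝ) ≤ CR⁻¹ := by positivity
    have k1 : (b - a) ^ δ * CF⁻¹ ≤ (b - a) ^ δ * (CF ^ δ)⁻¹ :=
      mul_le_mul_of_nonneg_left hinv hba0
    calc CF⁻¹ * CR⁻¹ * (b - a) ^ δ = CR⁻¹ * ((b - a) ^ δ * CF⁻¹) := by ring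
    _ ≤ CR⁻¹ * ((b - a) ^ δ * (CF ^ δ)⁻¹) := mul_le_mul_of_nonneg_left k1 hCR0'

/-- A continuous nonvanishing function on `ℝ` has constant sign. -/
lemma sign_const (g : ℝ → ℝ) (hg : Continuous g) (hne : ∀ x, g x ≠ 0) :
    (∀ x, 0 < g x) ∨ (∀ x, g x < 0) := by
  rcases (hne 0).lt_or_gt with h0 | h0
  · right
    intro y
    by_contra hy
    push_neg at hy
    have hy' : 0 < g y := lt_of_le_of_ne hy (Ne.symm (hne y))
    have hmem : (0:ℝ) ∈ Set.uIcc (g 0) (g y) := by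
      rw [Set.mem_uIcc]; exact Or.inl ⟨h0.le, hy'.le⟩
    obtain ⟨z, _, hz⟩ := intermediate_value_uIcc hg.continuousOn hmem
    exact hne z hz
  · left
    intro y
    by_contra hy
    push_neg at hy
    have hy' : g y < 0 := lt_of_le_of_ne hy (hne y)
    have hmem : (0:ℝ) ∈ Set.uIcc (g 0) (g y) := by
      rw [Set.mem_uIcc]; exact Or.inr ⟨hy'.le, h0.le⟩
    obtain ⟨z, _, hz⟩ := intermediate_value_uIcc hg.continuousOn hmem
    exact hne z hz

/-- Two-sided difference bounds from two-sided derivative bounds. -/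
lemma bdd_of_deriv (F : ℝ → ℝ) (CF : ℝ) (hCF : 1 ≤ CF) (hdiff : Differentiable ℝ F)
    (hd : ∀ x, CF⁻¹ ≤ deriv F x ∧ deriv F x ≤ CF) :
    ∀ x y : ℝ, x ≤ y → CF⁻¹ * (y - x) ≤ F y - F x ∧ F y - F x ≤ CF * (y - x) := by
  intro x y hxy
  constructor
  · have hG : Differentiable ℝ (fun t => F t - CF⁻¹ * t) :=
      hdiff.sub (differentiable_id.const_mul CF⁻¹)
    have hGd : ∀ t, deriv (fun t => F t - CF⁻¹ * t) t = deriv F t - CF⁻¹ := by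
      intro t
      have h1 : HasDerivAt (fun t => F t - CF⁻¹ * t) (deriv F t - CF⁻¹ * 1) t :=
        ((hdiff t).hasDerivAt).sub ((hasDerivAt_id t).const_mul CF⁻¹)
      simpa using h1.deriv
    have hmono : Monotone (fun t => F t - CF⁻¹ * t) :=
      monotone_of_deriv_nonneg hG (fun t => by rw [hGd t]; linarith [(hd t).1])
    have := hmono hxy
    simp only at this
    linarith
  · have hG : Differentiable ℝ (fun t => CF * t - F t) :=
      (differentiable_id.const_mul CF).sub hdiff
    have hGd : ∀ t, deriv (fun t => CF * t - F t) t = CF - deriv F t := by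
      intro t
      have h1 : HasDerivAt (fun t => CF * t - F t) (CF * 1 - deriv F t) t :=
        ((hasDerivAt_id t).const_mul CF).sub ((hdiff t).hasDerivAt)
      simpa using h1.deriv
    have hmono : Monotone (fun t => CF * t - F t) :=
      monotone_of_deriv_nonneg hG (fun t => by rw [hGd t]; linarith [(hd t).2])
    have := hmono hxy
    simp only at this
    linarith

theorem stmt_3 (F : ℝ → ℝ) (CF : ℝ) (hCF : 1 ≤ CF)
    (hF : ContDiff ℝ 1 F) (hbij : Function.Bijective F)
    (hder : ∀ x : ℝ, CF⁻¹ ≤ |deriv F x| ∧ |deriv F x| ≤ CF)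
    (X : Set ℝ) (δ CR α₀ α₁ : ℝ)
    (hδ0 : 0 ≤ δ) (hδ1 : δ ≤ 1) (hCR : 1 ≤ CR) (hα0 : 0 ≤ α₀) (hα : CF ^ 2 * α₀ ≤ α₁)
    (h : IsDeltaRegular X δ CR α₀ α₁) :
    IsDeltaRegular (F '' X) δ (CF * CR) (CF * α₀) (CF⁻¹ * α₁) := by
  have hdiff : Differentiable ℝ F := hF.differentiable one_ne_zero
  have hdc : Continuous (deriv F) := hF.continuous_deriv le_rfl
  have hCF0 : 0 < CF := lt_of_lt_of_le one_pos hCF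
  have hCFi0 : 0 < CF⁻¹ := inv_pos.mpr hCF0
  have hne : ∀ x, deriv F x ≠ 0 := by
    intro x hx
    have := (hder x).1
    rw [hx, abs_zero] at this
    linarith
  rcases sign_const (deriv F) hdc hne with hpos | hneg
  · refine core_deltaRegular F CF hCF hbij.2 ?_ X δ CR α₀ α₁ hδ0 hδ1 hCR hα0 hα h
    refine bdd_of_deriv F CF hCF hdiff ?_
    intro x
    have habs : |deriv F x| = deriv F x := abs_of_pos (hpos x)
    obtain ⟨k1, k2⟩ := hder x
    rw [habs] at k1 k2
    exact ⟨k1, k2⟩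
  · have key : IsDeltaRegular ((fun t => -F t) '' X) δ (CF * CR) (CF * α₀) (CF⁻¹ * α₁) := by
      have hsurj' : Function.Surjective (fun t => -F t) := fun y => by
        obtain ⟨x, hx⟩ := hbij.2 (-y)
        exact ⟨x, by show -F x = y; rw [hx]; ring⟩
      refine core_deltaRegular (fun t => -F t) CF hCF hsurj' ?_ X δ CR α₀ α₁
        hδ0 hδ1 hCR hα0 hα h
      refine bdd_of_deriv (fun t => -F t) CF hCF hdiff.neg ?_
      intro x
      have hdn : deriv (fun t => -F t) x = -deriv F x := deriv.neg
      have habs : |deriv F x| = -deriv F x := abs_of_neg (hneg x)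
      obtain ⟨k1, k2⟩ := hder x
      rw [habs] at k1 k2
      rw [hdn]
      exact ⟨k1, k2⟩
    have himg : F '' X = Neg.neg '' ((fun t => -F t) '' X) := by
      rw [← Set.image_comp]
      congr 1
      funext t
      simp
    rw [himg]
    exact neg_deltaRegular _ _ _ _ _ key
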